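/- Let A and B be symmetric positive definite n×n real matrices and set D_A = (A+B)^{-1}A, D_B = (A+B)^{-1}B. Then D_A + D_B = I and for every u ∈ ℝⁿ, (D_B u)ᵀ A (D_B u) + (D_A u)ᵀ B (D_A u) ≤ uᵀ (A^{-1} + B^{-1})^{-1} u ≤ min(uᵀAu, uᵀBu). -/

import Mathlib

open Matrix

lemma quad_rw {n : ℕ} (M A : Matrix (Fin n) (Fin n) ℝ) (u : Fin n → ℝ) :
    (M *ᵥ u) ⬝ᵥ A *ᵥ (M *ᵥ u) = u ⬝ᵥ (Mᵀ * A * M) *ᵥ u := by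
  rw [dotProduct_mulVec, vecMul_mulVec, ← dotProduct_mulVec, mulVec_mulVec]

/-- Deluxe scaling matrices sum to the identity and satisfy the parallel-sum bound. -/
theorem deluxe_parallel_sum_bound (n : ℕ) (A B : Matrix (Fin n) (Fin n) ℝ)
    (hA : A.PosDef) (hB : B.PosDef) :
    (A + B)⁻¹ * A + (A + B)⁻¹ * B = 1 ∧
    ∀ u : Fin n → ℝ,
      (((A + B)⁻¹ * B) *ᵥ u) ⬝ᵥ A *ᵥ (((A + B)⁻¹ * B) *ᵥ u)
          + (((A + B)⁻¹ * A) *ᵥ u) ⬝ᵥ B *ᵥ (((A + B)⁻¹ * A) *ᵥ u)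
        ≤ u ⬝ᵥ (A⁻¹ + B⁻¹)⁻¹ *ᵥ u ∧
      u ⬝ᵥ (A⁻¹ + B⁻¹)⁻¹ *ᵥ u ≤ min (u ⬝ᵥ A *ᵥ u) (u ⬝ᵥ B *ᵥ u) := by
  have hS : (A + B).PosDef := hA.add hB
  have hSd := isUnit_iff_isUnit_det _ |>.1 hS.isUnit
  have hAd := isUnit_iff_isUnit_det _ |>.1 hA.isUnit
  have hBd := isUnit_iff_isUnit_det _ |>.1 hB.isUnit
  have hSinv : (A + B)⁻¹ * (A + B) = 1 := nonsing_inv_mul _ hSd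
  have hSinv' : (A + B) * (A + B)⁻¹ = 1 := mul_nonsing_inv _ hSd
  have hsum : (A + B)⁻¹ * A + (A + B)⁻¹ * B = 1 := by rw [← mul_add]; exact hSinv
  have hAs : Aᵀ = A := hA.1.eq
  have hBs : Bᵀ = B := hB.1.eq
  have hSs : (A + B)⁻¹ᵀ = (A + B)⁻¹ := hS.1.inv.eq
  set S := (A + B)⁻¹ with hSdef
  -- parallel sum identity
  have hsplit : A⁻¹ + B⁻¹ = A⁻¹ * (A + B) * B⁻¹ := by
    rw [mul_add, add_mul, nonsing_inv_mul _ hAd, one_mul, mul_assoc,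
      mul_nonsing_inv _ hBd, mul_one, add_comm]
  have hP : (A⁻¹ + B⁻¹)⁻¹ = B * S * A := by
    rw [hsplit, Matrix.mul_inv_rev, Matrix.mul_inv_rev,
      Matrix.nonsing_inv_nonsing_inv _ hBd, Matrix.nonsing_inv_nonsing_inv _ hAd, mul_assoc]
  -- key algebraic identity
  have key : (S * B)ᵀ * A * (S * B) + (S * A)ᵀ * B * (S * A) = B * S * A := by
    have h1 : (S * B)ᵀ = B * S := by rw [transpose_mul, hBs, hSs]
    have h2 : (S * A)ᵀ = A * S := by rw [transpose_mul, hAs, hSs]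
    rw [h1, h2]
    have e1 : B * S * A * (S * B) = B * S * B - B * S * B * S * B := by
      have : A = (A + B) - B := by rw [add_sub_cancel_right]
      rw [this]
      have : B * S * ((A + B) - B) = B - B * S * B := by
        rw [mul_sub, mul_assoc, hSdef, hSinv, mul_one]
      rw [this]; noncomm_ring
    have e2 : A * S * B * (S * A) = B - 2 • (B * S * B) + B * S * B * S * B := by
      have hA' : A = (A + B) - B := by rw [add_sub_cancel_right]
      calc A * S * B * (S * A)
          = ((A + B) - B) * S * B * (S * ((A + B) - B)) := by rw [← hA']
        _ = (B - B * S * B) * (S * (A + B)) - (B - B * S * B) * (S * B) := by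
            have : ((A + B) - B) * S * B = B - B * S * B := by
              rw [sub_mul, sub_mul, hSdef, hSinv', one_mul]
            rw [this]; noncomm_ring
        _ = (B - B * S * B) - (B * S * B - B * S * B * S * B) := by
            rw [hSdef, hSinv]
            have : (B - B * (A + B)⁻¹ * B) * ((A + B)⁻¹ * B)
                = B * (A + B)⁻¹ * B - B * (A + B)⁻¹ * B * (A + B)⁻¹ * B := by noncomm_ring
            rw [this, mul_one]
        _ = B - 2 • (B * S * B) + B * S * B * S * B := by noncomm_ring
    rw [e1, e2]
    have e3 : B * S * A = B - B * S * B := by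
      have : A = (A + B) - B := by rw [add_sub_cancel_right]
      rw [this, mul_sub, mul_assoc, hSdef, hSinv, mul_one]
    rw [e3]; noncomm_ring
  -- difference identities
  have hone : (1 : Matrix (Fin n) (Fin n) ℝ) - B * S = A * S := by
    rw [← hSinv', ← sub_mul, add_sub_cancel_right]
  have hone' : (1 : Matrix (Fin n) (Fin n) ℝ) - S * A = S * B := by
    rw [← hSinv, ← mul_sub, add_sub_cancel_left]
  have hAP : A - B * S * A = A * S * A := by rw [← hone, sub_mul, one_mul]
  have hBP : B - B * S * A = B * S * B := by
    have h : B - B * S * A = B * (1 - S * A) := by rw [mul_sub, mul_one, mul_assoc]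
    rw [h, hone', ← mul_assoc]
  -- positivity of the differences
  have hSinvPSD : S.PosSemidef := hS.inv.posSemidef
  have hApsd : (A * S * A).PosSemidef := by
    have := hSinvPSD.conjTranspose_mul_mul_same A
    simpa [conjTranspose_eq_transpose_of_trivial, hAs] using this
  have hBpsd : (B * S * B).PosSemidef := by
    have := hSinvPSD.conjTranspose_mul_mul_same B
    simpa [conjTranspose_eq_transpose_of_trivial, hBs] using this
  refine ⟨hsum, fun u => ?_⟩
  have hql := quad_rw (S * B) A u
  have hqr := quad_rw (S * A) B u
  have hEq : (((A + B)⁻¹ * B) *ᵥ u) ⬝ᵥ A *ᵥ (((A + B)⁻¹ * B) *ᵥ u)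
      + (((A + B)⁻¹ * A) *ᵥ u) ⬝ᵥ B *ᵥ (((A + B)⁻¹ * A) *ᵥ u)
      = u ⬝ᵥ (A⁻¹ + B⁻¹)⁻¹ *ᵥ u := by
    rw [← hSdef, hql, hqr, ← dotProduct_add, ← add_mulVec, key, hP]
  have hle1 : u ⬝ᵥ (A⁻¹ + B⁻¹)⁻¹ *ᵥ u ≤ u ⬝ᵥ A *ᵥ u := by
    have h0 : 0 ≤ u ⬝ᵥ (A * S * A) *ᵥ u := by simpa using hApsd.dotProduct_mulVec_nonneg u
    rw [← hAP, sub_mulVec, dotProduct_sub] at h0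
    rw [hP]; linarith
  have hle2 : u ⬝ᵥ (A⁻¹ + B⁻¹)⁻¹ *ᵥ u ≤ u ⬝ᵥ B *ᵥ u := by
    have h0 : 0 ≤ u ⬝ᵥ (B * S * B) *ᵥ u := by simpa using hBpsd.dotProduct_mulVec_nonneg u
    rw [← hBP, sub_mulVec, dotProduct_sub] at h0
    rw [hP]; linarith
  exact ⟨le_of_eq hEq, le_min hle1 hle2⟩
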